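/- Let ⟨W,R⟩ be a bounded directed graph, n ∈ ℕ, and u an ultrafilter on W. Then deg⁺(u) = n (u has exactly n distinct R^ue-successors in the ultrafilter extension) if and only if {w ∈ W : deg⁺(w) = n} ∈ u. -/

import Mathlib

open Set Filter FirstOrder Language

/-- `R⁻(X)`: the set of elements having an `R`-successor in `X`. -/
def Rminus {W : Type*} (R : W → W → Prop) (X : Set W) : Set W := {w | ∃ s ∈ X, R w s}

/-- `R⁺(X)`: the set of elements having an `R`-predecessor in `X`. -/
def Rplus {W : Type*} (R : W → W → Prop) (X : Set W) : Set W := {s | ∃ w ∈ X, R w s}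

/-- The relation of the ultrafilter extension: `R^ue u v ↔ ∀ X ∈ v, R⁻(X) ∈ u`. -/
def ueRel {W : Type*} (R : W → W → Prop) (u v : Ultrafilter W) : Prop :=
  ∀ X ∈ v, Rminus R X ∈ u

/-- Out-degree `deg⁺(w)`, as an extended natural number. -/
noncomputable def degPlus {W : Type*} (R : W → W → Prop) (w : W) : ℕ∞ := {v | R w v}.encard

/-- In-degree `deg⁻(w)`, as an extended natural number. -/
noncomputable def degMinus {W : Type*} (R : W → W → Prop) (w : W) : ℕ∞ := {v | R v w}.encard

/-- A directed graph is bounded if `deg(w) = deg⁺(w) + deg⁻(w)` is uniformly bounded. -/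
def Bounded {W : Type*} (R : W → W → Prop) : Prop :=
  ∃ n : ℕ, ∀ w, degPlus R w + degMinus R w ≤ (n : ℕ∞)

/-- A directed graph `⟨W,R⟩` as a structure for the first-order language `L_R` with a
single binary relation symbol (`Language.graph`). -/
def grStruct {W : Type*} (R : W → W → Prop) : Language.graph.Structure W where
  RelMap | .adj => fun x => R (x 0) (x 1)

/-- `D` is ℵ₁-incomplete: some countable family of members of `D` has empty intersection. -/
def Aleph1Incomplete {I : Type*} (D : Ultrafilter I) : Prop :=
  ∃ J : ℕ → Set I, (∀ n, J n ∈ D) ∧ ⋂ n, J n = ∅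

/-- The `n`-Hull `⟨w⟩ⁿ`: `⟨w⟩⁰ = {w}`, `⟨w⟩^{i+1} = ⟨w⟩^i ∪ R⁺(⟨w⟩^i) ∪ R⁻(⟨w⟩^i)`. -/
def hull {W : Type*} (R : W → W → Prop) (w : W) : ℕ → Set W
  | 0 => {w}
  | n + 1 => hull R w n ∪ Rplus R (hull R w n) ∪ Rminus R (hull R w n)

/-- The ω-Hull `⟨w⟩^ω = ⋃ₙ ⟨w⟩ⁿ`. -/
def hullOmega {W : Type*} (R : W → W → Prop) (w : W) : Set W := ⋃ n, hull R w n

/-- A pointed isomorphism between the induced subgraphs on `A ⊆ V` and `A' ⊆ V'`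
sending the base point `a` to `a'`. -/
def PointedIso {V V' : Type*} (R : V → V → Prop) (R' : V' → V' → Prop)
    (A : Set V) (A' : Set V') (a : V) (a' : V') : Prop :=
  ∃ f : V → V', Set.BijOn f A A' ∧ f a = a' ∧
    ∀ x ∈ A, ∀ y ∈ A, (R x y ↔ R' (f x) (f y))

section AuxStmt10


lemma exists_not_mem_of_encard_le {U : Set ℕ} {d : ℕ} (h : U.encard ≤ (d : ℕ∞)) :
    ∃ n, n ≤ d ∧ n ∉ U := by
  by_contra hc; push_neg at hc
  have hsub : ↑(Finset.range (d+1)) ⊆ U := by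
    intro n hn
    exact hc n (Nat.lt_succ_iff.1 (Finset.mem_range.1 hn))
  have h2 := (Set.encard_le_encard hsub).trans h
  rw [Set.encard_coe_eq_coe_finsetCard, Finset.card_range] at h2
  exact absurd (Nat.cast_le.1 h2) (by omega)

lemma exists_greedy_coloring {α : Type*} (G : α → α → Prop) (hsym : ∀ a b, G a b → G b a)
    (hirr : ∀ a, ¬ G a a) (d : ℕ)
    (hcard : ∀ a, ({b | G a b}).encard ≤ (d : ℕ∞)) :
    ∃ c : α → ℕ, (∀ a, c a ≤ d) ∧ (∀ a b, G a b → c a ≠ c b) := by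
  classical
  have wf : WellFounded (WellOrderingRel (α := α)) :=
    (WellOrderingRel.isWellOrder).toIsWellFounded.wf
  set F : ∀ a : α, (∀ b, WellOrderingRel b a → ℕ) → ℕ :=
    fun a ih => sInf {n | n ≤ d ∧ ∀ b, ∀ h : WellOrderingRel b a, G a b → ih b h ≠ n} with hF
  set c : α → ℕ := wf.fix F with hc
  have hceq : ∀ a, c a = sInf {n | n ≤ d ∧ ∀ b, WellOrderingRel b a → (G a b → c b ≠ n)} := by
    intro a
    conv_lhs => rw [hc, wf.fix_eq]
  have hmem : ∀ a, c a ≤ d ∧ ∀ b, WellOrderingRel b a → (G a b → c b ≠ c a) := by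
    intro a
    have hne : {n | n ≤ d ∧ ∀ b, WellOrderingRel b a → (G a b → c b ≠ n)}.Nonempty := by
      have himg : (c '' {b | G a b}).encard ≤ (d : ℕ∞) :=
        (Set.encard_image_le _ _).trans (hcard a)
      obtain ⟨n, hnd, hn⟩ := exists_not_mem_of_encard_le himg
      exact ⟨n, hnd, fun b _ hG hcb => hn ⟨b, hG, hcb⟩⟩
    have := Nat.sInf_mem hne
    rw [← hceq a] at this
    exact this
  refine ⟨c, fun a => (hmem a).1, ?_⟩
  intro a b hG
  rcases trichotomous_of (WellOrderingRel) a b with h | h | h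
  · exact ((hmem b).2 a h (hsym a b hG)).symm.symm
  · exact absurd (h ▸ hG) (hirr b)
  · exact ((hmem a).2 b h hG).symm

lemma encard_biUnion_le {α ι : Type*} (s : Finset ι) (f : ι → Set α) :
    (⋃ i ∈ s, f i).encard ≤ ∑ i ∈ s, (f i).encard := by
  classical
  induction s using Finset.induction_on with
  | empty => simp
  | insert _ _ h ih =>
    rw [Finset.set_biUnion_insert, Finset.sum_insert h]
    exact (Set.encard_union_le _ _).trans (by gcongr)

lemma exists_mem_of_iUnion_mem {W : Type*} {m : ℕ} {u : Ultrafilter W} {s : Fin m → Set W}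
    (h : (⋃ i, s i) ∈ u) : ∃ i, s i ∈ u := by
  by_contra hc; push_neg at hc
  have h2 : (⋂ i, (s i)ᶜ) ∈ u :=
    Filter.iInter_mem.2 fun i => Ultrafilter.compl_mem_iff_notMem.2 (hc i)
  obtain ⟨w, hw1, hw2⟩ := Ultrafilter.nonempty_of_mem (Filter.inter_mem h h2)
  obtain ⟨i, hi⟩ := Set.mem_iUnion.1 hw1
  exact (Set.mem_iInter.1 hw2 i) hi

lemma exists_disjoint_mem {W : Type*} {m : ℕ} (v : Fin m → Ultrafilter W)
    (hv : Function.Injective v) :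
    ∃ Y : Fin m → Set W, (∀ i, Y i ∈ v i) ∧ ∀ ⦃i j⦄, i ≠ j → Disjoint (Y i) (Y j) := by
  classical
  have hB : ∀ i j : Fin m, ∃ A : Set W, i ≠ j → (A ∈ v i ∧ Aᶜ ∈ v j) := by
    intro i j
    by_cases hij : i = j
    · exact ⟨∅, fun h => absurd hij h⟩
    · have hne : v i ≠ v j := fun h => hij (hv h)
      have hex : ∃ A : Set W, A ∈ v i ∧ A ∉ v j := by
        by_contra h; push_neg at h
        exact hne (Ultrafilter.eq_of_le (fun A hA => h A hA)).symm
      obtain ⟨A, hA1, hA2⟩ := hex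
      exact ⟨A, fun _ => ⟨hA1, Ultrafilter.compl_mem_iff_notMem.2 hA2⟩⟩
  choose B hBs using hB
  refine ⟨fun i => ⋂ j, (if i = j then Set.univ else B i j ∩ (B j i)ᶜ), ?_, ?_⟩
  · intro i
    refine Filter.iInter_mem.2 fun j => ?_
    by_cases hij : i = j
    · simp [hij]
    · rw [if_neg hij]
      exact Filter.inter_mem (hBs i j hij).1 (hBs j i (Ne.symm hij)).2
  · intro i j hij
    rw [Set.disjoint_left]
    intro x hx hx'
    have h1 : x ∈ B i j ∩ (B j i)ᶜ := by
      have := Set.mem_iInter.1 hx j; rwa [if_neg hij] at this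
    have h2 : x ∈ B j i ∩ (B i j)ᶜ := by
      have := Set.mem_iInter.1 hx' i; rwa [if_neg (Ne.symm hij)] at this
    exact h2.2 h1.1

def uF {W : Type*} (R : W → W → Prop) (u : Ultrafilter W) : Filter W where
  sets := {Y | {w | ∀ s, R w s → s ∈ Y} ∈ u}
  univ_sets := Filter.univ_mem' fun w => fun s _ => trivial
  sets_of_superset := fun hx hxy => Filter.mem_of_superset hx fun w hw s hs => hxy (hw s hs)
  inter_sets := fun hx hy =>
    Filter.mem_of_superset (Filter.inter_mem hx hy) fun w hw s hs => ⟨hw.1 s hs, hw.2 s hs⟩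

lemma mem_uF {W : Type*} {R : W → W → Prop} {u : Ultrafilter W} {Y : Set W} :
    Y ∈ uF R u ↔ {w | ∀ s, R w s → s ∈ Y} ∈ u := Iff.rfl

lemma ueRel_iff_le_uF {W : Type*} (R : W → W → Prop) (u v : Ultrafilter W) :
    ueRel R u v ↔ (v : Filter W) ≤ uF R u := by
  constructor
  · intro h Y hY
    by_contra hY'
    have h1 : Yᶜ ∈ v := Ultrafilter.compl_mem_iff_notMem.2 hY'
    have h2 := h Yᶜ h1
    obtain ⟨w, hw1, hw2⟩ := Ultrafilter.nonempty_of_mem (Filter.inter_mem (mem_uF.1 hY) h2)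
    obtain ⟨s, hs1, hs2⟩ := hw2
    exact hs1 (hw1 s hs2)
  · intro hle X hX
    have h1 : {w | ∀ s, R w s → s ∈ Xᶜ} ∉ u := by
      intro h
      have h2 : Xᶜ ∈ v := hle h
      exact (Ultrafilter.compl_mem_iff_notMem.1 h2) hX
    have h2 : {w | ∀ s, R w s → s ∈ Xᶜ}ᶜ ∈ u := Ultrafilter.compl_mem_iff_notMem.2 h1
    refine Filter.mem_of_superset h2 ?_
    intro w hw
    simp only [Set.mem_compl_iff, Set.mem_setOf_eq, not_forall] at hw
    obtain ⟨s, hs1, hs2⟩ := hw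
    exact ⟨s, not_not.1 hs2, hs1⟩

lemma exists_ue_succ {W : Type*} (R : W → W → Prop) (u : Ultrafilter W) (X : Set W)
    (hX : {w | ∃ s, R w s ∧ s ∈ X} ∈ u) : ∃ v : Ultrafilter W, ueRel R u v ∧ X ∈ v := by
  have hne : (uF R u ⊓ 𝓟 X).NeBot := by
    rw [Filter.inf_principal_neBot_iff]
    intro U hU
    obtain ⟨w, hw1, s, hs1, hs2⟩ := Ultrafilter.nonempty_of_mem (Filter.inter_mem (mem_uF.1 hU) hX)
    exact ⟨s, hw1 s hs1, hs2⟩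
  obtain ⟨v, hv⟩ := Ultrafilter.exists_le (uF R u ⊓ 𝓟 X)
  exact ⟨v, (ueRel_iff_le_uF R u v).2 (hv.trans inf_le_left),
    Filter.le_principal_iff.1 (hv.trans inf_le_right)⟩

lemma main_lemma {W : Type*} (R : W → W → Prop) (N : ℕ)
    (hsuccN : ∀ w, ({s | R w s}).encard ≤ (N : ℕ∞))
    (hpredN : ∀ w, ({s | R s w}).encard ≤ (N : ℕ∞))
    (u : Ultrafilter W) (k : ℕ)
    (hk : {w | ({s | R w s}).encard = (k : ℕ∞)} ∈ u) :
    {v : Ultrafilter W | ueRel R u v}.encard = (k : ℕ∞) := by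
  classical
  set V := {v : Ultrafilter W | ueRel R u v} with hV
  have hpredfin : ∀ w, ({s | R s w}).Finite := fun w => Set.finite_of_encard_le_coe (hpredN w)
  -- Part 1 : V.encard ≤ k
  have hle : V.encard ≤ (k : ℕ∞) := by
    by_contra hgt
    push_neg at hgt
    have h1 : ((k+1 : ℕ) : ℕ∞) ≤ V.encard := by
      push_cast
      exact Order.add_one_le_of_lt hgt
    obtain ⟨t, hts, htc⟩ := Set.exists_subset_encard_eq h1
    have htfin : t.Finite := Set.finite_of_encard_eq_coe htc
    haveI := htfin.fintype
    have hcard' : Fintype.card t = k+1 := by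
      rw [Set.encard_eq_coe_toFinset_card, Set.toFinset_card] at htc
      exact_mod_cast htc
    obtain ⟨e⟩ : Nonempty (Fin (k+1) ≃ t) := ⟨(Fintype.equivFinOfCardEq hcard').symm⟩
    set v : Fin (k+1) → Ultrafilter W := fun i => (e i : Ultrafilter W) with hv
    have hvinj : Function.Injective v := fun i j h => e.injective (Subtype.coe_injective h)
    have hvV : ∀ i, v i ∈ V := fun i => hts (e i).2
    obtain ⟨Y, hYmem, hYdisj⟩ := exists_disjoint_mem v hvinj
    have hmiss : ∀ w ∈ {w | ({s | R w s}).encard = (k : ℕ∞)}, ∃ i, ∀ s, R w s → s ∉ Y i := by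
      intro w hw
      by_contra hc; push_neg at hc
      choose f hf1 hf2 using hc
      have hfinj : Function.Injective f := by
        intro i j hij
        by_contra hne
        exact (Set.disjoint_left.1 (hYdisj hne)) (hf2 i) (hij ▸ hf2 j)
      have h2 : ((k+1:ℕ) : ℕ∞) ≤ ({s | R w s}).encard := by
        have hr : Set.range f ⊆ {s | R w s} := by rintro _ ⟨i, rfl⟩; exact hf1 i
        have h3 := Set.encard_le_encard hr
        rwa [← Set.image_univ, Set.InjOn.encard_image (hfinj.injOn), Set.encard_univ,
          ENat.card_eq_coe_fintype_card, Fintype.card_fin] at h3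
      rw [hw] at h2
      exact absurd (Nat.cast_le.1 h2) (by omega)
    have hU : (⋃ i, {w | w ∈ {w | ({s | R w s}).encard = (k : ℕ∞)} ∧ ∀ s, R w s → s ∉ Y i}) ∈ u := by
      refine Filter.mem_of_superset hk fun w hw => ?_
      obtain ⟨i, hi⟩ := hmiss w hw
      exact Set.mem_iUnion.2 ⟨i, hw, hi⟩
    obtain ⟨i, hi⟩ := exists_mem_of_iUnion_mem hU
    have hY' : Rminus R (Y i) ∈ u := (hvV i) (Y i) (hYmem i)
    obtain ⟨w, hw1, hw2⟩ := Ultrafilter.nonempty_of_mem (Filter.inter_mem hi hY')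
    obtain ⟨s, hs1, hs2⟩ := hw2
    exact hw1.2 s hs2 hs1
  -- Part 2 : k ≤ V.encard
  have hge : (k : ℕ∞) ≤ V.encard := by
    by_contra hgt
    push_neg at hgt
    have hVfin : V.Finite := Set.finite_of_encard_le_coe hgt.le
    obtain ⟨m, hm⟩ := hVfin.exists_encard_eq_coe
    have hmk : m < k := by
      rw [hm] at hgt
      exact_mod_cast hgt
    have hk1 : 1 ≤ k := by omega
    by_cases hm0 : m = 0
    · subst hm0
      rw [Nat.cast_zero, Set.encard_eq_zero] at hm
      have hX : {w | ∃ s, R w s ∧ s ∈ (Set.univ : Set W)} ∈ u := by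
        refine Filter.mem_of_superset hk fun w hw => ?_
        have hne : ({s | R w s}).Nonempty := by
          apply Set.nonempty_of_encard_ne_zero
          rw [hw]
          exact_mod_cast Nat.cast_ne_zero.2 (by omega)
        obtain ⟨s, hs⟩ := hne
        exact ⟨s, hs, trivial⟩
      obtain ⟨v, hvue, -⟩ := exists_ue_succ R u _ hX
      have hvV : v ∈ V := hvue
      rw [hm] at hvV
      exact hvV
    · haveI := hVfin.fintype
      have hcard' : Fintype.card V = m := by
        rw [Set.encard_eq_coe_toFinset_card, Set.toFinset_card] at hm
        exact_mod_cast hm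
      obtain ⟨e⟩ : Nonempty (Fin m ≃ V) := ⟨(Fintype.equivFinOfCardEq hcard').symm⟩
      set v : Fin m → Ultrafilter W := fun i => (e i : Ultrafilter W) with hv
      have hvinj : Function.Injective v := fun i j h => e.injective (Subtype.coe_injective h)
      have hvue : ∀ i, ueRel R u (v i) := fun i => (e i).2
      have hsurj : ∀ v' : Ultrafilter W, ueRel R u v' → ∃ i, v i = v' := by
        intro v' h
        exact ⟨e.symm ⟨v', h⟩, by simp [hv]⟩
      obtain ⟨Y, hYmem, hYdisj⟩ := exists_disjoint_mem v hvinj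
      -- covering
      have hcov : {w | ∀ s, R w s → s ∈ ⋃ i, Y i} ∈ u := by
        by_contra hc
        have h2 : {w | ∃ s, R w s ∧ s ∈ (⋃ i, Y i)ᶜ} ∈ u := by
          refine Filter.mem_of_superset (Ultrafilter.compl_mem_iff_notMem.2 hc) ?_
          intro w hw
          simp only [Set.mem_compl_iff, Set.mem_setOf_eq, not_forall] at hw
          obtain ⟨s, hs1, hs2⟩ := hw
          exact ⟨s, hs1, hs2⟩
        obtain ⟨v', hv'ue, hv'X⟩ := exists_ue_succ R u _ h2
        obtain ⟨i, rfl⟩ := hsurj v' hv'ue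
        obtain ⟨s, hs1, hs2⟩ := Ultrafilter.nonempty_of_mem (Filter.inter_mem (hYmem i) hv'X)
        exact hs2 (Set.mem_iUnion.2 ⟨i, hs1⟩)
      -- pigeonhole
      have hpig : ∀ w, ({s | R w s}).encard = (k : ℕ∞) → (∀ s, R w s → s ∈ ⋃ i, Y i) →
          ∃ i, ∃ a b, a ≠ b ∧ (R w a ∧ a ∈ Y i) ∧ (R w b ∧ b ∈ Y i) := by
        intro w hwS hwc
        by_contra hc; push_neg at hc
        have hsub : {s | R w s} ⊆ ⋃ i ∈ (Finset.univ : Finset (Fin m)), ({s | R w s} ∩ Y i) := by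
          intro s hs
          obtain ⟨i, hi⟩ := Set.mem_iUnion.1 (hwc s hs)
          exact Set.mem_biUnion (Finset.mem_univ i) ⟨hs, hi⟩
        have hone : ∀ i : Fin m, ({s | R w s} ∩ Y i).encard ≤ 1 := by
          intro i
          rw [Set.encard_le_one_iff]
          intro a b ha hb
          by_contra hne
          exact hc i a b hne ⟨ha.1, ha.2⟩ hb.1 hb.2
        have h3 := (Set.encard_le_encard hsub).trans (encard_biUnion_le _ _)
        have h4 : ∑ i ∈ (Finset.univ : Finset (Fin m)), ({s | R w s} ∩ Y i).encard ≤
            ∑ _i ∈ (Finset.univ : Finset (Fin m)), (1 : ℕ∞) :=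
          Finset.sum_le_sum fun i _ => hone i
        rw [Finset.sum_const, Finset.card_univ, Fintype.card_fin, nsmul_eq_mul, mul_one] at h4
        rw [hwS] at h3
        have h5 : (k : ℕ∞) ≤ (m : ℕ∞) := h3.trans h4
        exact absurd (Nat.cast_le.1 h5) (by omega)
      set Ti : Fin m → Set W := fun i =>
        {w | ∃ a b, a ≠ b ∧ (R w a ∧ a ∈ Y i) ∧ (R w b ∧ b ∈ Y i)} with hTi
      have hT : (⋃ i, Ti i) ∈ u := by
        refine Filter.mem_of_superset (Filter.inter_mem hk hcov) fun w hw => ?_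
        exact Set.mem_iUnion.2 (hpig w hw.1 hw.2)
      obtain ⟨i0, hT0⟩ := exists_mem_of_iUnion_mem hT
      -- graph and coloring
      set G : W → W → Prop := fun a b =>
        a ≠ b ∧ a ∈ Y i0 ∧ b ∈ Y i0 ∧ ∃ w ∈ Ti i0, R w a ∧ R w b with hG
      have hGcard : ∀ a, ({b | G a b}).encard ≤ ((N*N : ℕ) : ℕ∞) := by
        intro a
        have hsub : {b | G a b} ⊆ ⋃ w ∈ (hpredfin a).toFinset, {s | R w s} := by
          rintro b ⟨hne, hax, hbx, w, hwT, hwa, hwb⟩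
          exact Set.mem_biUnion ((hpredfin a).mem_toFinset.2 hwa) hwb
        have h1 := (Set.encard_le_encard hsub).trans (encard_biUnion_le _ _)
        have h2 : ∑ w ∈ (hpredfin a).toFinset, ({s | R w s}).encard ≤
            ∑ _w ∈ (hpredfin a).toFinset, (N : ℕ∞) :=
          Finset.sum_le_sum fun w _ => hsuccN w
        rw [Finset.sum_const, nsmul_eq_mul] at h2
        have h3 : ((hpredfin a).toFinset.card : ℕ∞) ≤ (N : ℕ∞) := by
          rw [← Set.encard_coe_eq_coe_finsetCard, Set.Finite.coe_toFinset]
          exact hpredN a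
        calc ({b | G a b}).encard ≤ _ := h1.trans h2
          _ ≤ (N : ℕ∞) * (N : ℕ∞) := by exact mul_le_mul_left h3 _
          _ = ((N*N : ℕ) : ℕ∞) := by push_cast; ring
      obtain ⟨c, hcle, hcprop⟩ := exists_greedy_coloring G
        (fun a b h => ⟨h.1.symm, h.2.2.1, h.2.1, by obtain ⟨w, h1, h2, h3⟩ := h.2.2.2; exact ⟨w, h1, h3, h2⟩⟩)
        (fun a h => h.1 rfl) (N*N) hGcard
      -- dichotomy
      have hdich : ∀ n : ℕ, {w | ∀ s, R w s → ¬(s ∈ Y i0 ∧ c s = n)} ∈ u := by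
        intro n
        by_contra hc1
        have hCn : {w | ∃ s, R w s ∧ s ∈ {a | a ∈ Y i0 ∧ c a = n}} ∈ u := by
          refine Filter.mem_of_superset (Ultrafilter.compl_mem_iff_notMem.2 hc1) ?_
          intro w hw
          simp only [Set.mem_compl_iff, Set.mem_setOf_eq, not_forall] at hw
          obtain ⟨s, hs1, hs2⟩ := hw
          exact ⟨s, hs1, not_not.1 hs2⟩
        have hDn : {w | ∃ s, R w s ∧ s ∈ {a | a ∈ Y i0 ∧ c a ≠ n}} ∈ u := by
          refine Filter.mem_of_superset hT0 ?_
          rintro w ⟨a, b, hne, ⟨hwa, hax⟩, ⟨hwb, hbx⟩⟩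
          have hGab : G a b := ⟨hne, hax, hbx, w, ⟨a, b, hne, ⟨hwa, hax⟩, ⟨hwb, hbx⟩⟩, hwa, hwb⟩
          have hcc := hcprop a b hGab
          by_cases hca : c a = n
          · exact ⟨b, hwb, hbx, fun h => hcc (hca.trans h.symm)⟩
          · exact ⟨a, hwa, hax, hca⟩
        obtain ⟨v1, hv1ue, hv1⟩ := exists_ue_succ R u _ hCn
        obtain ⟨v2, hv2ue, hv2⟩ := exists_ue_succ R u _ hDn
        have hv1X : Y i0 ∈ v1 := Filter.mem_of_superset hv1 fun a ha => ha.1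
        have hv2X : Y i0 ∈ v2 := Filter.mem_of_superset hv2 fun a ha => ha.1
        obtain ⟨i1, rfl⟩ := hsurj v1 hv1ue
        obtain ⟨i2, rfl⟩ := hsurj v2 hv2ue
        have hi1 : i1 = i0 := by
          by_contra h
          obtain ⟨s, hs1, hs2⟩ := Ultrafilter.nonempty_of_mem (Filter.inter_mem (hYmem i1) hv1X)
          exact Set.disjoint_left.1 (hYdisj h) hs1 hs2
        have hi2 : i2 = i0 := by
          by_contra h
          obtain ⟨s, hs1, hs2⟩ := Ultrafilter.nonempty_of_mem (Filter.inter_mem (hYmem i2) hv2X)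
          exact Set.disjoint_left.1 (hYdisj h) hs1 hs2
        subst hi1; subst hi2
        obtain ⟨s, hs1, hs2⟩ := Ultrafilter.nonempty_of_mem (Filter.inter_mem hv1 hv2)
        exact hs2.2 hs1.2
      have hfin2 : (⋂ n ∈ Finset.range (N*N+1), {w | ∀ s, R w s → ¬(s ∈ Y i0 ∧ c s = n)}) ∈ u :=
        (Filter.biInter_finset_mem _).2 fun n _ => hdich n
      obtain ⟨w, hwT, hwI⟩ := Ultrafilter.nonempty_of_mem (Filter.inter_mem hT0 hfin2)
      obtain ⟨a, b, hne, ⟨hwa, hax⟩, -⟩ := hwT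
      have hmem2 : w ∈ {w | ∀ s, R w s → ¬(s ∈ Y i0 ∧ c s = c a)} :=
        Set.mem_iInter₂.1 hwI (c a) (Finset.mem_range.2 (Nat.lt_succ_of_le (hcle a)))
      exact hmem2 a hwa ⟨hax, rfl⟩
  exact le_antisymm hle hge

end AuxStmt10

/-- in a bounded graph, `deg⁺(u) = n` in the ultrafilter extension iff
`{w : deg⁺(w) = n} ∈ u`. -/
theorem stmt_10 {W : Type*} (R : W → W → Prop) (hb : Bounded R) (n : ℕ) (u : Ultrafilter W) :
    {v : Ultrafilter W | ueRel R u v}.encard = (n : ℕ∞) ↔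
      {w : W | degPlus R w = (n : ℕ∞)} ∈ u := by
  obtain ⟨N, hN⟩ := hb
  have hsuccN : ∀ w, ({s | R w s}).encard ≤ (N : ℕ∞) := fun w => le_self_add.trans (hN w)
  have hpredN : ∀ w, ({s | R s w}).encard ≤ (N : ℕ∞) := fun w => le_add_self.trans (hN w)
  constructor
  · intro h
    have hcover : (Set.univ : Set W) ⊆
        ⋃ k ∈ Set.Iic N, {w | ({s | R w s}).encard = (k : ℕ∞)} := by
      intro w _
      have h1 : ({s | R w s}).encard ≤ (N : ℕ∞) := hsuccN w
      obtain ⟨k, hk⟩ := (Set.finite_of_encard_le_coe h1).exists_encard_eq_coe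
      have hkN : k ≤ N := by
        rw [hk] at h1
        exact_mod_cast h1
      exact Set.mem_biUnion (Set.mem_Iic.2 hkN) hk
    have hU : (⋃ k ∈ Set.Iic N, {w | ({s | R w s}).encard = (k : ℕ∞)}) ∈ u :=
      Filter.mem_of_superset Filter.univ_mem hcover
    obtain ⟨k, -, hk2⟩ := (Ultrafilter.finite_biUnion_mem_iff (Set.finite_Iic N)).1 hU
    have hmain := main_lemma R N hsuccN hpredN u k hk2
    rw [h] at hmain
    have hnk : n = k := by exact_mod_cast hmain
    subst hnk
    exact hk2
  · intro h
    exact main_lemma R N hsuccN hpredN u n h
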